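/- arXiv:2206.13653 — 2 statements merged into one kernel-verified Lean document; each statement's English description precedes it below -/
import Mathlib

section
/- Let λ(d) = 0.5 - 4.05/(d+2) and g(d) = 1 + (11.51 + 1.5·log d + log((d - 2.05)/(1 + λ(d)))) / log((d - 2.05)/(1 + λ(d)) - 0.5·d). Then g is strictly monotonically decreasing on [7, ∞) and lim_{d→∞} g(d) = 3.5. -/
open Filter

/-- `λ(d) = 0.5 - 4.05/(d+2)`. -/
noncomputable def lamFun (d : ℝ) : ℝ := 0.5 - 4.05 / (d + 2)

/-- `g(d) = 1 + (11.51 + 1.5·log d + log((d-2.05)/(1+λ(d)))) / log((d-2.05)/(1+λ(d)) - 0.5d)`. -/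
noncomputable def gFun (d : ℝ) : ℝ :=
  1 + (11.51 + 1.5 * Real.log d + Real.log ((d - 2.05) / (1 + lamFun d))) /
        Real.log ((d - 2.05) / (1 + lamFun d) - 0.5 * d)

noncomputable def Af (d : ℝ) : ℝ := (d^2 - 0.05*d - 4.1) / (1.5*d - 1.05)
noncomputable def Bf (d : ℝ) : ℝ := (0.25*d^2 + 0.475*d - 4.1) / (1.5*d - 1.05)

lemma hgp {d : ℝ} (hd : 5 ≤ d) : (0:ℝ) < 1.5*d - 1.05 := by norm_num; linarith
lemma hfp {d : ℝ} (hd : 5 ≤ d) : (0:ℝ) < d^2 - 0.05*d - 4.1 := by nlinarith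
lemma hhp {d : ℝ} (hd : 5 ≤ d) : (0:ℝ) < 0.25*d^2 + 0.475*d - 4.1 := by nlinarith

lemma eqA {d : ℝ} (hd : 5 ≤ d) : (d - 2.05) / (1 + lamFun d) = Af d := by
  have h2 : d + 2 ≠ 0 := by linarith
  have hl : 1 + lamFun d = (1.5*d - 1.05) / (d + 2) := by
    unfold lamFun; field_simp; ring
  rw [hl, div_div_eq_mul_div]
  unfold Af; congr 1; ring

lemma eqB {d : ℝ} (hd : 5 ≤ d) : (d - 2.05) / (1 + lamFun d) - 0.5*d = Bf d := by
  rw [eqA hd]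
  unfold Af Bf
  rw [div_sub' (hgp hd).ne']
  congr 1; ring

lemma hAfpos {d : ℝ} (hd : 5 ≤ d) : 0 < Af d := div_pos (hfp hd) (hgp hd)
lemma hBfpos {d : ℝ} (hd : 5 ≤ d) : 0 < Bf d := div_pos (hhp hd) (hgp hd)

lemma hBf1 {d : ℝ} (hd : 7 ≤ d) : 1 < Bf d := by
  have h5 : (5:ℝ) ≤ d := by linarith
  rw [Bf, lt_div_iff₀ (hgp h5)]
  nlinarith [sq_nonneg (d-7)]

lemma hasDerivAt_Af {d : ℝ} (hd : 5 ≤ d) :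
    HasDerivAt Af ((1.5*d^2 - 2.1*d + 6.2025)/(1.5*d - 1.05)^2) d := by
  have hnum : HasDerivAt (fun x : ℝ => x^2 - 0.05*x - 4.1) (2*d - 0.05) d := by
    have h2 : HasDerivAt (fun x : ℝ => x^2) (2*d) d := by simpa using hasDerivAt_pow 2 d
    simpa using (h2.sub ((hasDerivAt_id d).const_mul 0.05)).sub_const 4.1
  have hden : HasDerivAt (fun x : ℝ => 1.5*x - 1.05) 1.5 d := by
    simpa using ((hasDerivAt_id d).const_mul (1.5:ℝ)).sub_const 1.05
  have h := hnum.div hden (hgp hd).ne'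
  refine h.congr_deriv ?_
  rw [div_eq_div_iff (pow_pos (hgp hd) 2).ne' (pow_pos (hgp hd) 2).ne']
  ring

lemma hasDerivAt_Bf {d : ℝ} (hd : 5 ≤ d) :
    HasDerivAt Bf ((0.375*d^2 - 0.525*d + 5.65125)/(1.5*d - 1.05)^2) d := by
  have hnum : HasDerivAt (fun x : ℝ => 0.25*x^2 + 0.475*x - 4.1) (0.5*d + 0.475) d := by
    have h2 : HasDerivAt (fun x : ℝ => x^2) (2*d) d := by simpa using hasDerivAt_pow 2 d
    have := ((h2.const_mul 0.25).add ((hasDerivAt_id d).const_mul 0.475)).sub_const 4.1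
    refine this.congr_deriv ?_
    ring
  have hden : HasDerivAt (fun x : ℝ => 1.5*x - 1.05) 1.5 d := by
    simpa using ((hasDerivAt_id d).const_mul (1.5:ℝ)).sub_const 1.05
  have h := hnum.div hden (hgp hd).ne'
  refine h.congr_deriv ?_
  rw [div_eq_div_iff (pow_pos (hgp hd) 2).ne' (pow_pos (hgp hd) 2).ne']
  ring

lemma hB'16 {d : ℝ} (hd : 5 ≤ d) :
    (1:ℝ)/6 ≤ (0.375*d^2 - 0.525*d + 5.65125)/(1.5*d - 1.05)^2 := by
  rw [le_div_iff₀ (pow_pos (hgp hd) 2)]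
  nlinarith

lemma hA'pos {d : ℝ} (hd : 5 ≤ d) :
    (0:ℝ) < (1.5*d^2 - 2.1*d + 6.2025)/(1.5*d - 1.05)^2 := by
  apply div_pos _ (pow_pos (hgp hd) 2)
  nlinarith

lemma hNB_key {d : ℝ} (hd : 7 ≤ d) :
    (1.5/d + ((1.5*d^2 - 2.1*d + 6.2025)/(1.5*d - 1.05)^2) / Af d) * Bf d
      ≤ 5/12 + 2/d := by
  have h5 : (5:ℝ) ≤ d := by linarith
  have hd0 : (0:ℝ) < d := by linarith
  have hx : (0:ℝ) ≤ d - 7 := by linarith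
  have e1 : (1.5/d + ((1.5*d^2 - 2.1*d + 6.2025)/(1.5*d - 1.05)^2) / Af d) * Bf d
      = ((0.25*d^2 + 0.475*d - 4.1) * (1.5*(d^2 - 0.05*d - 4.1)*(1.5*d - 1.05)
          + d*(1.5*d^2 - 2.1*d + 6.2025)))
        / (d * (d^2 - 0.05*d - 4.1) * (1.5*d - 1.05)^2) := by
    have h1 : (1.5*d - 1.05) ≠ 0 := (hgp h5).ne'
    have h2 : (d^2 - 0.05*d - 4.1) ≠ 0 := (hfp h5).ne'
    have h3 : d ≠ 0 := hd0.ne'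
    unfold Af Bf
    generalize d^2 - 0.05*d - 4.1 = F at h2 ⊢
    field_simp
  have e2 : (5:ℝ)/12 + 2/d = (5*d + 24)/(12*d) := by
    field_simp; ring
  have hp1 : (0:ℝ) < d * (d^2 - 0.05*d - 4.1) * (1.5*d - 1.05)^2 :=
    mul_pos (mul_pos hd0 (hfp h5)) (pow_pos (hgp h5) 2)
  rw [e1, e2, div_le_div_iff₀ hp1 (by positivity)]
  nlinarith [pow_nonneg hx 2, pow_nonneg hx 3, pow_nonneg hx 4, hx,
    mul_nonneg (pow_nonneg hx 3) hx]

lemma hlogd_lb {d : ℝ} (hd : 7 ≤ d) : (1.386:ℝ) ≤ Real.log d := by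
  have h4 : Real.log 4 ≤ Real.log d := Real.log_le_log (by norm_num) (by linarith)
  have : Real.log 4 = 2 * Real.log 2 := by
    rw [show (4:ℝ) = 2^2 by norm_num, Real.log_pow]; push_cast; ring
  nlinarith [Real.log_two_gt_d9]

lemma hlogd_ub {d : ℝ} (hd : 7 ≤ d) : Real.log d ≤ 1.08 + d/7 := by
  have hd0 : (0:ℝ) < d := by linarith
  have h1 : Real.log (d/7) ≤ d/7 - 1 := Real.log_le_sub_one_of_pos (by positivity)
  have h2 : Real.log (d/7) = Real.log d - Real.log 7 := Real.log_div hd0.ne' (by norm_num)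
  have h3 : Real.log 7 ≤ Real.log 8 := Real.log_le_log (by norm_num) (by norm_num)
  have h4 : Real.log 8 = 3 * Real.log 2 := by
    rw [show (8:ℝ) = 2^3 by norm_num, Real.log_pow]; push_cast; ring
  nlinarith [Real.log_two_lt_d9]

lemma hlogB_ub {d : ℝ} (hd : 7 ≤ d) : Real.log (Bf d) ≤ Real.log d - 1.386 := by
  have h5 : (5:ℝ) ≤ d := by linarith
  have hB4 : Bf d ≤ d/4 := by
    rw [Bf, div_le_div_iff₀ (hgp h5) (by norm_num)]
    nlinarith
  have h1 : Real.log (Bf d) ≤ Real.log (d/4) := Real.log_le_log (hBfpos h5) hB4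
  have h2 : Real.log (d/4) = Real.log d - Real.log 4 :=
    Real.log_div (by positivity : (0:ℝ) < d).ne' (by norm_num)
  have h3 : Real.log 4 = 2 * Real.log 2 := by
    rw [show (4:ℝ) = 2^2 by norm_num, Real.log_pow]; push_cast; ring
  nlinarith [Real.log_two_gt_d9]

lemma hlogA_lb {d : ℝ} (hd : 7 ≤ d) : Real.log d - 1.39 ≤ Real.log (Af d) := by
  have h5 : (5:ℝ) ≤ d := by linarith
  have hA3 : d/3 ≤ Af d := by
    rw [Af, div_le_div_iff₀ (by norm_num) (hgp h5)]
    nlinarith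
  have h1 : Real.log (d/3) ≤ Real.log (Af d) := Real.log_le_log (by positivity) hA3
  have h2 : Real.log (d/3) = Real.log d - Real.log 3 :=
    Real.log_div (by positivity : (0:ℝ) < d).ne' (by norm_num)
  have h3 : Real.log 3 ≤ Real.log 4 := Real.log_le_log (by norm_num) (by norm_num)
  have h4 : Real.log 4 = 2 * Real.log 2 := by
    rw [show (4:ℝ) = 2^2 by norm_num, Real.log_pow]; push_cast; ring
  nlinarith [Real.log_two_lt_d9]

/-- The numerator of the derivative of `g` is negative. -/
lemma key_neg {d : ℝ} (hd : 7 ≤ d) :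
    (1.5/d + ((1.5*d^2 - 2.1*d + 6.2025)/(1.5*d - 1.05)^2) / Af d) * Real.log (Bf d)
      - (11.51 + 1.5*Real.log d + Real.log (Af d))
        * (((0.375*d^2 - 0.525*d + 5.65125)/(1.5*d - 1.05)^2) / Bf d) < 0 := by
  have h5 : (5:ℝ) ≤ d := by linarith
  have hd0 : (0:ℝ) < d := by linarith
  have hLBpos : 0 < Real.log (Bf d) := Real.log_pos (hBf1 hd)
  have hBpos : 0 < Bf d := hBfpos h5
  have hPpos : 0 ≤ 1.5/d + ((1.5*d^2 - 2.1*d + 6.2025)/(1.5*d - 1.05)^2)/Af d := by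
    have h1 := hA'pos h5
    have h2 := hAfpos h5
    positivity
  have hAlb := hlogA_lb hd
  have hL14 := hlogd_lb hd
  have hkey := hNB_key hd
  have h2dL : (2/d)*Real.log d ≤ 0.595 := by
    rw [div_mul_eq_mul_div, div_le_iff₀ hd0]
    nlinarith [hlogd_ub hd]
  have hB' := hB'16 h5
  have hLB_ub := hlogB_ub hd
  set A' := (1.5*d^2 - 2.1*d + 6.2025)/(1.5*d - 1.05)^2 with hA'def
  set B' := (0.375*d^2 - 0.525*d + 5.65125)/(1.5*d - 1.05)^2 with hB'def
  set L := Real.log d with hLdef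
  set LB := Real.log (Bf d) with hLBdef
  set B := Bf d with hBdef
  set lA := Real.log (Af d) with hlAdef
  set tA := A' / Af d with htAdef
  clear_value A' B' L LB B lA tA
  have hBne : B ≠ 0 := hBpos.ne'
  have hexpand : ((1.5/d + tA)*LB - (11.51 + 1.5*L + lA)*(B'/B)) * B
      = (1.5/d + tA) * B * LB - (11.51 + 1.5*L + lA) * B' := by
    field_simp
  have hNlb : 10.12 + 2.5*L ≤ 11.51 + 1.5*L + lA := by linarith
  have hNpos : (0:ℝ) ≤ 11.51 + 1.5*L + lA := by nlinarith
  have hNB' : (10.12 + 2.5*L)*(1/6) ≤ (11.51 + 1.5*L + lA)*B' :=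
    mul_le_mul hNlb hB' (by norm_num) hNpos
  have hNB2 : (10.12 + 2.5*L)*(1/6) = 10.12/6 + (2.5/6)*L := by ring
  have hmain : (1.5/d + tA) * B * LB < (11.51 + 1.5*L + lA) * B' := by
    have s1 : (1.5/d + tA) * B * LB ≤ (5/12 + 2/d)*LB :=
      mul_le_mul_of_nonneg_right hkey hLBpos.le
    have s2 : (5/12 + 2/d)*LB ≤ (5/12 + 2/d)*(L - 1.386) := by
      apply mul_le_mul_of_nonneg_left hLB_ub
      positivity
    have s3 : (5/12 + 2/d)*(L - 1.386)
        = (5/12)*L - (5/12)*1.386 + (2/d)*L - (2/d)*1.386 := by ring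
    have s4 : (0:ℝ) ≤ (2/d)*1.386 := by positivity
    linarith [s1, s2, s3, s4, h2dL, hNB', hNB2]
  by_contra hcon
  push_neg at hcon
  have h0 : 0 ≤ ((1.5/d + tA)*LB - (11.51 + 1.5*L + lA)*(B'/B)) * B :=
    mul_nonneg hcon hBpos.le
  rw [hexpand] at h0
  linarith

lemma gFun_hasDeriv {x : ℝ} (hx : 7 ≤ x) : ∃ e, e < 0 ∧ HasDerivAt gFun e x := by
  have h5 : (5:ℝ) ≤ x := by linarith
  have hx0 : (0:ℝ) < x := by linarith
  have hN : HasDerivAt (fun y => 11.51 + 1.5*Real.log y + Real.log (Af y))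
      (1.5/x + ((1.5*x^2 - 2.1*x + 6.2025)/(1.5*x - 1.05)^2)/Af x) x := by
    have h1 : HasDerivAt (fun y : ℝ => Real.log (Af y))
        (((1.5*x^2 - 2.1*x + 6.2025)/(1.5*x - 1.05)^2)/Af x) x :=
      (hasDerivAt_Af h5).log (hAfpos h5).ne'
    have h2 : HasDerivAt (fun y : ℝ => 11.51 + 1.5*Real.log y) (1.5/x) x := by
      have := ((Real.hasDerivAt_log hx0.ne').const_mul (1.5:ℝ)).const_add (11.51:ℝ)
      exact this.congr_deriv (by ring)
    exact h2.add h1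
  have hD : HasDerivAt (fun y => Real.log (Bf y))
      (((0.375*x^2 - 0.525*x + 5.65125)/(1.5*x - 1.05)^2)/Bf x) x :=
    (hasDerivAt_Bf h5).log (hBfpos h5).ne'
  have hDne : Real.log (Bf x) ≠ 0 := (Real.log_pos (hBf1 hx)).ne'
  have hdiv := (hN.div hD hDne).const_add (1:ℝ)
  have hev : (fun y => 1 + (11.51 + 1.5*Real.log y + Real.log (Af y))/Real.log (Bf y))
      =ᶠ[nhds x] gFun := by
    filter_upwards [eventually_gt_nhds (show (5:ℝ) < x by linarith)] with y hy
    unfold gFun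
    rw [eqB hy.le, eqA hy.le]
  refine ⟨_, ?_, hdiv.congr_of_eventuallyEq hev.symm⟩
  apply div_neg_of_neg_of_pos
  · exact key_neg hx
  · exact pow_pos (Real.log_pos (hBf1 hx)) 2

lemma tendA : Tendsto (fun d => Af d / d) atTop (nhds (2/3)) := by
  have hev : (fun d : ℝ => (1 - 0.05/d - 4.1/d^2)/(1.5 - 1.05/d)) =ᶠ[atTop]
      (fun d => Af d / d) := by
    filter_upwards [eventually_ge_atTop (7:ℝ)] with d hd
    have h5 : (5:ℝ) ≤ d := by linarith
    have h1 : (1.5*d - 1.05) ≠ 0 := (hgp h5).ne'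
    have h2 : d ≠ 0 := by intro h; rw [h] at hd; norm_num at hd
    unfold Af
    field_simp
  have h1 : Tendsto (fun d : ℝ => 0.05/d) atTop (nhds 0) :=
    tendsto_const_nhds.div_atTop tendsto_id
  have h2 : Tendsto (fun d : ℝ => 4.1/d^2) atTop (nhds 0) :=
    tendsto_const_nhds.div_atTop (tendsto_pow_atTop (by norm_num))
  have h3 : Tendsto (fun d : ℝ => 1.05/d) atTop (nhds 0) :=
    tendsto_const_nhds.div_atTop tendsto_id
  have c1 : Tendsto (fun _ : ℝ => (1:ℝ)) atTop (nhds 1) := tendsto_const_nhds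
  have c15 : Tendsto (fun _ : ℝ => (1.5:ℝ)) atTop (nhds 1.5) := tendsto_const_nhds
  have h := ((c1.sub h1).sub h2).div (c15.sub h3) (by norm_num : (1.5:ℝ) - 0 ≠ 0)
  have h' := h.congr' hev
  convert h' using 2
  norm_num

lemma tendB : Tendsto (fun d => Bf d / d) atTop (nhds (1/6)) := by
  have hev : (fun d : ℝ => (0.25 + 0.475/d - 4.1/d^2)/(1.5 - 1.05/d)) =ᶠ[atTop]
      (fun d => Bf d / d) := by
    filter_upwards [eventually_ge_atTop (7:ℝ)] with d hd
    have h5 : (5:ℝ) ≤ d := by linarith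
    have h1 : (1.5*d - 1.05) ≠ 0 := (hgp h5).ne'
    have h2 : d ≠ 0 := by intro h; rw [h] at hd; norm_num at hd
    unfold Bf
    field_simp
  have h1 : Tendsto (fun d : ℝ => 0.475/d) atTop (nhds 0) :=
    tendsto_const_nhds.div_atTop tendsto_id
  have h2 : Tendsto (fun d : ℝ => 4.1/d^2) atTop (nhds 0) :=
    tendsto_const_nhds.div_atTop (tendsto_pow_atTop (by norm_num))
  have h3 : Tendsto (fun d : ℝ => 1.05/d) atTop (nhds 0) :=
    tendsto_const_nhds.div_atTop tendsto_id
  have c025 : Tendsto (fun _ : ℝ => (0.25:ℝ)) atTop (nhds 0.25) := tendsto_const_nhds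
  have c15 : Tendsto (fun _ : ℝ => (1.5:ℝ)) atTop (nhds 1.5) := tendsto_const_nhds
  have h := ((c025.add h1).sub h2).div (c15.sub h3) (by norm_num : (1.5:ℝ) - 0 ≠ 0)
  have h' := h.congr' hev
  convert h' using 2
  norm_num

lemma part3 : Tendsto gFun atTop (nhds 3.5) := by
  have hA0 : Tendsto (fun d => (11.51 + Real.log (Af d / d))/Real.log d) atTop (nhds 0) := by
    have hc : Tendsto (fun d => 11.51 + Real.log (Af d / d)) atTop
        (nhds (11.51 + Real.log (2/3))) :=
      tendsto_const_nhds.add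
        (((Real.continuousAt_log (by norm_num : (2/3:ℝ) ≠ 0)).tendsto).comp tendA)
    exact hc.div_atTop Real.tendsto_log_atTop
  have hB0 : Tendsto (fun d => Real.log (Bf d / d)/Real.log d) atTop (nhds 0) := by
    have hc : Tendsto (fun d => Real.log (Bf d / d)) atTop (nhds (Real.log (1/6))) :=
      ((Real.continuousAt_log (by norm_num : (1/6:ℝ) ≠ 0)).tendsto).comp tendB
    exact hc.div_atTop Real.tendsto_log_atTop
  have hphi : Tendsto (fun d => 1 + (2.5 + (11.51 + Real.log (Af d / d))/Real.log d)
      /(1 + Real.log (Bf d / d)/Real.log d)) atTop (nhds (1 + (2.5 + 0)/(1 + 0))) :=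
    tendsto_const_nhds.add ((tendsto_const_nhds.add hA0).div
      (tendsto_const_nhds.add hB0) (by norm_num))
  have heq : (fun d : ℝ => 1 + (2.5 + (11.51 + Real.log (Af d / d))/Real.log d)
      /(1 + Real.log (Bf d / d)/Real.log d)) =ᶠ[atTop] gFun := by
    filter_upwards [eventually_ge_atTop (7:ℝ)] with d hd
    have h5 : (5:ℝ) ≤ d := by linarith
    have hd0 : (0:ℝ) < d := by linarith
    have hLne : Real.log d ≠ 0 := by
      have := hlogd_lb hd; intro h; rw [h] at this; norm_num at this
    have hLBne : Real.log (Bf d) ≠ 0 := (Real.log_pos (hBf1 hd)).ne'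
    unfold gFun
    rw [eqB h5, eqA h5, Real.log_div (hAfpos h5).ne' hd0.ne',
      Real.log_div (hBfpos h5).ne' hd0.ne']
    have e1 : 1 + (Real.log (Bf d) - Real.log d)/Real.log d
        = Real.log (Bf d)/Real.log d := by field_simp; ring
    have e2 : 2.5 + (11.51 + (Real.log (Af d) - Real.log d))/Real.log d
        = (11.51 + 1.5*Real.log d + Real.log (Af d))/Real.log d := by field_simp; ring
    rw [e1, e2, div_div_div_comm, div_self hLne, div_one]
  have h := hphi.congr' heq
  convert h using 2
  norm_num

/-- the argument of the outer logarithm exceeds `1` on `[7, ∞)` (so `g` is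
well-defined), `g` is strictly decreasing on `[7, ∞)`, and `g(d) → 3.5` as `d → ∞`. -/
theorem stmt2 :
    (∀ d : ℝ, 7 ≤ d → 1 < (d - 2.05) / (1 + lamFun d) - 0.5 * d) ∧
    StrictAntiOn gFun (Set.Ici (7 : ℝ)) ∧
    Tendsto gFun atTop (nhds 3.5) := by
  refine ⟨?_, ?_, part3⟩
  · intro d hd
    rw [eqB (by linarith)]
    exact hBf1 hd
  · apply strictAntiOn_of_deriv_neg (convex_Ici _)
    · intro x hx
      obtain ⟨e, _, h⟩ := gFun_hasDeriv hx
      exact h.continuousAt.continuousWithinAt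
    · intro x hx
      rw [interior_Ici] at hx
      obtain ⟨e, he, h⟩ := gFun_hasDeriv hx.le
      rw [h.deriv]
      exact he
end

section
/- Let F ∈ ℤ[x,y] be an irreducible binary form of degree d ≥ 3 with roots α_1, ..., α_d of F(x,1) in an algebraic closure of ℚ. There exists an index j ∈ {1,...,d} and a representation α_j = (v·α_1 - u)/(-t·α_1 + s) with integers s,t,u,v, sv - tu ≠ 0, if and only if the matrix M = |sv-tu|^{-1/2}·(s u; t v) belongs to Aut'|F|. -/
/-- The binary form `F(x,y) = ∑ cᵢ xⁱ y^(d-i)` evaluated over `ℝ`. -/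
noncomputable def binForm (d : ℕ) (c : Fin (d + 1) → ℤ) (x y : ℝ) : ℝ :=
  ∑ i : Fin (d + 1), (c i : ℝ) * x ^ (i : ℕ) * y ^ (d - (i : ℕ))

/-- The enhanced automorphism group `Aut'|F|` of a degree-`d` binary form `F`. -/
noncomputable def autSetF (d : ℕ) (F : ℝ → ℝ → ℝ) : Set (Matrix (Fin 2) (Fin 2) ℝ) :=
  {M | ∃ s t u v : ℤ, s * v - t * u ≠ 0 ∧
    M = (Real.sqrt |((s * v - t * u : ℤ) : ℝ)|)⁻¹ • !![(s : ℝ), (u : ℝ); (t : ℝ), (v : ℝ)] ∧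
    ((∀ x y : ℝ, F ((s : ℝ) * x + (u : ℝ) * y) ((t : ℝ) * x + (v : ℝ) * y) =
        Real.sqrt |((s * v - t * u : ℤ) : ℝ)| ^ d * F x y) ∨
     (∀ x y : ℝ, F ((s : ℝ) * x + (u : ℝ) * y) ((t : ℝ) * x + (v : ℝ) * y) =
        -(Real.sqrt |((s * v - t * u : ℤ) : ℝ)| ^ d * F x y)))}

open Polynomial Finset


section StmtAux

variable {d : ℕ} {c : Fin (d + 1) → ℤ} {s t u v : ℤ}

/-- The dehomogenized form `F(X,1)` over a field `K`. -/
noncomputable def myF (d : ℕ) (c : Fin (d + 1) → ℤ) (K : Type*) [Field K] : K[X] :=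
  ∑ i : Fin (d + 1), C ((c i : K)) * X ^ (i : ℕ)

/-- The substituted form `F(sX+u, tX+v)` over a field `K`. -/
noncomputable def myG (d : ℕ) (c : Fin (d + 1) → ℤ) (s t u v : ℤ) (K : Type*) [Field K] : K[X] :=
  ∑ i : Fin (d + 1), C ((c i : K)) * (C (s : K) * X + C (u : K)) ^ (i : ℕ)
    * (C (t : K) * X + C (v : K)) ^ (d - (i : ℕ))

lemma map_myF {K L : Type*} [Field K] [Field L] (φ : K →+* L) :
    (myF d c K).map φ = myF d c L := by
  simp [myF, Polynomial.map_sum, Polynomial.map_mul, Polynomial.map_pow, map_C]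

lemma map_myG {K L : Type*} [Field K] [Field L] (φ : K →+* L) :
    (myG d c s t u v K).map φ = myG d c s t u v L := by
  simp [myG, Polynomial.map_sum, Polynomial.map_mul, Polynomial.map_pow,
    Polynomial.map_add, map_C]

lemma eval_myF {K : Type*} [Field K] (x : K) :
    eval x (myF d c K) = ∑ i : Fin (d + 1), (c i : K) * x ^ (i : ℕ) := by
  rw [myF, eval_finset_sum]; simp

lemma eval_myG {K : Type*} [Field K] (x : K) :
    eval x (myG d c s t u v K)
      = ∑ i : Fin (d + 1), (c i : K) * ((s : K) * x + u) ^ (i : ℕ)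
          * ((t : K) * x + v) ^ (d - (i : ℕ)) := by
  rw [myG, eval_finset_sum]; simp

lemma coeff_myF {K : Type*} [Field K] : (myF d c K).coeff d = (c (Fin.last d) : K) := by
  rw [myF, finset_sum_coeff]
  rw [Finset.sum_eq_single (Fin.last d)]
  · simp
  · intro b _ hb
    rw [coeff_C_mul, coeff_X_pow, if_neg, mul_zero]
    exact fun h => hb (by ext; simp [h])
  · simp

lemma natDegree_myF_le {K : Type*} [Field K] : (myF d c K).natDegree ≤ d := by
  refine natDegree_sum_le_of_forall_le _ _ fun i _ => ?_
  refine le_trans (natDegree_mul_le) ?_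
  simp only [natDegree_C, natDegree_pow, natDegree_X, zero_add, mul_one]
  omega

lemma natDegree_myF (hcd : c (Fin.last d) ≠ 0) {K : Type*} [Field K] [CharZero K] :
    (myF d c K).natDegree = d := by
  refine le_antisymm natDegree_myF_le (le_natDegree_of_ne_zero ?_)
  rw [coeff_myF]
  exact_mod_cast hcd

lemma myF_ne_zero (hcd : c (Fin.last d) ≠ 0) {K : Type*} [Field K] [CharZero K] :
    myF d c K ≠ 0 := by
  intro h
  have := coeff_myF (d := d) (c := c) (K := K)
  rw [h] at this
  simp at this
  exact hcd (by exact_mod_cast this.symm)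

lemma natDegree_myG_le {K : Type*} [Field K] : (myG d c s t u v K).natDegree ≤ d := by
  refine natDegree_sum_le_of_forall_le _ _ fun i _ => ?_
  refine le_trans (natDegree_mul_le) (le_trans (add_le_add natDegree_mul_le le_rfl) ?_)
  simp only [natDegree_C, natDegree_pow, zero_add]
  have h1 : (C (s : K) * X + C (u : K)).natDegree ≤ 1 := by
    refine le_trans (natDegree_add_le _ _) (max_le ?_ (by simp))
    exact le_trans (natDegree_C_mul_le _ _) (by simp)
  have h2 : (C (t : K) * X + C (v : K)).natDegree ≤ 1 := by
    refine le_trans (natDegree_add_le _ _) (max_le ?_ (by simp))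
    exact le_trans (natDegree_C_mul_le _ _) (by simp)
  have := i.2
  calc (i:ℕ) * (C (s:K)*X + C (u:K)).natDegree + (d - (i:ℕ)) * (C (t:K)*X + C (v:K)).natDegree
      ≤ (i:ℕ) * 1 + (d - (i:ℕ)) * 1 := by gcongr
    _ ≤ d := by omega

lemma myF_root_irrational (hd : 3 ≤ d) (hcd : c (Fin.last d) ≠ 0)
    (hirr : Irreducible (myF d c ℚ)) {x : ℂ} (hx : eval x (myF d c ℂ) = 0) (q : ℚ) :
    x ≠ (q : ℂ) := by
  intro h
  subst h
  have halg : algebraMap ℚ ℂ q = (q : ℂ) := by norm_cast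
  have h0 : eval q (myF d c ℚ) = 0 := by
    have : eval ((q : ℂ)) ((myF d c ℚ).map (algebraMap ℚ ℂ)) = 0 := by
      rw [map_myF (algebraMap ℚ ℂ)]; exact hx
    rw [← halg, eval_map, eval₂_at_apply] at this
    exact (algebraMap ℚ ℂ).injective (by simpa using this)
  obtain ⟨r, hr⟩ := (dvd_iff_isRoot.mpr h0)
  rcases hirr.isUnit_or_isUnit hr with h1 | h1
  · exact (not_isUnit_of_natDegree_pos _ (by simp [natDegree_X_sub_C])) h1
  · have h2 : (myF d c ℚ).natDegree = 1 := by
      rw [hr, natDegree_mul (X_sub_C_ne_zero q) (fun h => by simp [h] at h1),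
        natDegree_X_sub_C, natDegree_eq_zero_of_isUnit h1]
    rw [natDegree_myF hcd] at h2
    omega

lemma sub_ne_zero' (hd : 3 ≤ d) (hcd : c (Fin.last d) ≠ 0)
    (hirr : Irreducible (myF d c ℚ)) {x : ℂ} (hx : eval x (myF d c ℂ) = 0)
    {a b : ℤ} (hab : ¬(a = 0 ∧ b = 0)) : (a : ℂ) - (b : ℂ) * x ≠ 0 := by
  by_cases hb : b = 0
  · have ha : a ≠ 0 := fun h => hab ⟨h, hb⟩
    simp [hb]
    exact_mod_cast ha
  · intro h
    have : x = ((a / b : ℚ) : ℂ) := by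
      push_cast
      rw [eq_div_iff (by exact_mod_cast hb : (b:ℂ) ≠ 0)]
      linear_combination -h
    exact myF_root_irrational hd hcd hirr hx (a / b) this

lemma factor_myF (hcd : c (Fin.last d) ≠ 0) (α : Fin d → ℂ) (hinj : Function.Injective α)
    (hroot : ∀ i, eval (α i) (myF d c ℂ) = 0) :
    myF d c ℂ = C ((c (Fin.last d) : ℂ)) * ∏ i : Fin d, (X - C (α i)) := by
  set q : ℂ[X] := C ((c (Fin.last d) : ℂ)) * ∏ i : Fin d, (X - C (α i)) with hq
  have hprodnd : (∏ i : Fin d, (X - C (α i))).natDegree = d := by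
    rw [natDegree_prod _ _ (fun i _ => X_sub_C_ne_zero (α i))]
    simp
  have hqnd : q.natDegree = d := by
    rw [hq, natDegree_C_mul (by exact_mod_cast hcd), hprodnd]
  have hqcoeff : q.coeff d = (c (Fin.last d) : ℂ) := by
    rw [hq, coeff_C_mul]
    have hm : (∏ i : Fin d, (X - C (α i))).Monic :=
      monic_prod_of_monic _ _ (fun i _ => monic_X_sub_C (α i))
    have : (∏ i : Fin d, (X - C (α i))).coeff d = 1 := by
      have h2 := hm.coeff_natDegree
      rw [hprodnd] at h2; exact h2
    rw [this, mul_one]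
  set p : ℂ[X] := myF d c ℂ - q with hp
  have hpz : p = 0 := by
    rcases eq_or_ne p 0 with h | h
    · exact h
    refine eq_zero_of_natDegree_lt_card_of_eval_eq_zero p hinj (fun i => ?_) ?_
    · rw [hp, eval_sub, hroot i, hq, eval_mul, eval_prod]
      rw [Finset.prod_eq_zero (mem_univ i) (by simp)]
      ring
    · rw [Fintype.card_fin]
      have hle : p.natDegree ≤ d :=
        le_trans (natDegree_sub_le _ _) (max_le natDegree_myF_le (le_of_eq hqnd))
      have hne : p.natDegree ≠ d := by
        intro hnd
        have hcz : p.coeff d = 0 := by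
          rw [hp, coeff_sub, hqcoeff, coeff_myF, sub_self]
        rw [← hnd] at hcz
        exact h (leadingCoeff_eq_zero.mp hcz)
      omega
  exact sub_eq_zero.mp hpz

lemma factor_myG (hdet : s * v - t * u ≠ 0) (α : Fin d → ℂ)
    (hf : myF d c ℂ = C ((c (Fin.last d) : ℂ)) * ∏ i : Fin d, (X - C (α i))) :
    myG d c s t u v ℂ
      = C ((c (Fin.last d) : ℂ))
        * ∏ i : Fin d, (C ((s : ℂ) - (t : ℂ) * α i) * X + C ((u : ℂ) - (v : ℂ) * α i)) := by
  apply eq_of_infinite_eval_eq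
  have hsub : {x : ℂ | (t : ℂ) * x + (v : ℂ) ≠ 0} ⊆
      {x | eval x (myG d c s t u v ℂ) = eval x (C ((c (Fin.last d) : ℂ))
        * ∏ i : Fin d, (C ((s : ℂ) - (t : ℂ) * α i) * X + C ((u : ℂ) - (v : ℂ) * α i)))} := by
    intro x hB
    simp only [Set.mem_setOf_eq] at hB ⊢
    set B : ℂ := (t : ℂ) * x + v with hBdef
    set w : ℂ := ((s : ℂ) * x + u) / B with hwdef
    have hw : (s : ℂ) * x + u = w * B := (div_mul_cancel₀ _ hB).symm
    calc eval x (myG d c s t u v ℂ)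
        = ∑ i : Fin (d+1), (c i : ℂ) * (w * B) ^ (i:ℕ) * B ^ (d - (i:ℕ)) := by
          rw [eval_myG, ← hBdef, hw]
      _ = ∑ i : Fin (d+1), ((c i : ℂ) * w ^ (i:ℕ)) * B ^ d := by
          refine Finset.sum_congr rfl fun i _ => ?_
          have hi : (i : ℕ) ≤ d := Nat.lt_succ_iff.mp i.2
          have hBpow : B ^ (i:ℕ) * B ^ (d - (i:ℕ)) = B ^ d := by
            rw [← pow_add, Nat.add_sub_cancel' hi]
          rw [mul_pow]
          linear_combination ((c i : ℂ) * w ^ (i:ℕ)) * hBpow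
      _ = (eval w (myF d c ℂ)) * B ^ d := by rw [eval_myF, Finset.sum_mul]
      _ = ((c (Fin.last d) : ℂ) * ∏ k : Fin d, (w - α k)) * B ^ d := by
          rw [hf, eval_mul, eval_C, eval_prod]; simp
      _ = (c (Fin.last d) : ℂ) * ∏ k : Fin d, ((w - α k) * B) := by
          rw [Finset.prod_mul_distrib, Finset.prod_const, Finset.card_univ, Fintype.card_fin]
          ring
      _ = (c (Fin.last d) : ℂ)
            * ∏ k : Fin d, (((s : ℂ) - (t : ℂ) * α k) * x + ((u : ℂ) - (v : ℂ) * α k)) := by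
          congr 1
          refine Finset.prod_congr rfl fun k _ => ?_
          rw [sub_mul, ← hw, hBdef]
          ring
      _ = _ := by rw [eval_mul, eval_C, eval_prod]; simp
  refine Set.Infinite.mono hsub ?_
  have hfin : {x : ℂ | (t : ℂ) * x + (v : ℂ) = 0}.Finite := by
    by_cases ht : (t : ℂ) = 0
    · have hv : (v : ℂ) ≠ 0 := by
        have : t = 0 := by exact_mod_cast ht
        subst this
        simp only [zero_mul, sub_zero] at hdet
        have : v ≠ 0 := fun h => hdet (by simp [h])
        exact_mod_cast this
      convert Set.finite_empty
      ext x; simp [ht, hv]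
    · apply Set.Finite.subset (Set.finite_singleton (-(v:ℂ)/t))
      intro x hx
      simp only [Set.mem_setOf_eq] at hx
      simp only [Set.mem_singleton_iff]
      rw [eq_div_iff ht]
      linear_combination hx
  have := hfin.infinite_compl
  exact this


lemma st_not_both_zero (hdet : s * v - t * u ≠ 0) : ¬(s = 0 ∧ t = 0) := by
  rintro ⟨rfl, rfl⟩; simp at hdet

lemma div_lemma (hd : 3 ≤ d) (hcd : c (Fin.last d) ≠ 0)
    (hirr : Irreducible (myF d c ℚ)) (α : Fin d → ℂ) (hinj : Function.Injective α)
    (hroot : ∀ i, eval (α i) (myF d c ℂ) = 0) (hdet : s * v - t * u ≠ 0)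
    (i0 j : Fin d) (hj : ((s:ℂ) - t * α i0) * α j + ((u:ℂ) - v * α i0) = 0) :
    ∃ lam : ℚ, lam ≠ 0 ∧ myG d c s t u v ℚ = C lam * myF d c ℚ ∧
      ((lam : ℂ)) = ∏ i : Fin d, ((s:ℂ) - t * α i) := by
  have hst : ∀ i, (s:ℂ) - t * α i ≠ 0 := fun i =>
    sub_ne_zero' hd hcd hirr (hroot i) (st_not_both_zero hdet)
  have hcdC : ((c (Fin.last d) : ℂ)) ≠ 0 := by exact_mod_cast hcd
  have hf := factor_myF hcd α hinj hroot
  have hg := factor_myG hdet α hf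
  -- G(α j) = 0
  have hgj : eval (α j) (myG d c s t u v ℂ) = 0 := by
    rw [hg, eval_mul, eval_prod]
    rw [Finset.prod_eq_zero (mem_univ i0) (by simp; linear_combination hj)]
    ring
  -- pass to ℚ
  have haevg : aeval (α j) (myG d c s t u v ℚ) = 0 := by
    rw [aeval_def, ← eval_map, map_myG (algebraMap ℚ ℂ)]; exact hgj
  have haevf : aeval (α j) (myF d c ℚ) = 0 := by
    rw [aeval_def, ← eval_map, map_myF (algebraMap ℚ ℂ)]; exact hroot j
  have hdvd : myF d c ℚ ∣ myG d c s t u v ℚ := by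
    obtain ⟨r, hr⟩ := minpoly.dvd ℚ (α j) haevf
    rcases hirr.isUnit_or_isUnit hr with h | h
    · exact absurd h (minpoly.not_isUnit ℚ (α j))
    · have : Associated (minpoly ℚ (α j)) (myF d c ℚ) := ⟨h.unit, by rw [hr]; rfl⟩
      exact dvd_trans this.symm.dvd (minpoly.dvd ℚ (α j) haevg)
  obtain ⟨q0, hq0⟩ := hdvd
  -- G ≠ 0 over ℂ hence over ℚ
  have hgCne : myG d c s t u v ℂ ≠ 0 := by
    rw [hg]
    refine mul_ne_zero (by simpa using hcdC) (Finset.prod_ne_zero_iff.mpr fun i _ => ?_)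
    intro h0
    apply hst i
    have h1 : (C ((s:ℂ) - t*α i) * X + C ((u:ℂ) - v*α i)).coeff 1 = (s:ℂ) - t*α i := by
      rw [coeff_add, coeff_C_mul, coeff_X_one, mul_one, coeff_C]; simp
    rw [h0] at h1
    simpa using h1.symm
  have hgQne : myG d c s t u v ℚ ≠ 0 := by
    intro h
    apply hgCne
    rw [← map_myG (algebraMap ℚ ℂ), h, Polynomial.map_zero]
  have hq0ne : q0 ≠ 0 := by rintro rfl; rw [mul_zero] at hq0; exact hgQne hq0
  have hq0deg : q0.natDegree = 0 := by
    have h1 : (myG d c s t u v ℚ).natDegree ≤ d := natDegree_myG_le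
    rw [hq0, natDegree_mul (myF_ne_zero hcd) hq0ne, natDegree_myF hcd] at h1
    omega
  set lam : ℚ := q0.coeff 0 with hlam
  have hq0C : q0 = C lam := eq_C_of_natDegree_eq_zero hq0deg
  have hlamne : lam ≠ 0 := by rintro h; rw [h, map_zero] at hq0C; exact hq0ne hq0C
  refine ⟨lam, hlamne, by rw [hq0, hq0C]; ring, ?_⟩
  -- leading coefficient comparison over ℂ
  have hmap : myG d c s t u v ℂ = C ((lam : ℂ)) * myF d c ℂ := by
    have := congrArg (Polynomial.map (algebraMap ℚ ℂ)) hq0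
    rw [map_myG (algebraMap ℚ ℂ), Polynomial.map_mul, map_myF (algebraMap ℚ ℂ), hq0C, map_C] at this
    rw [this]
    have : algebraMap ℚ ℂ lam = (lam : ℂ) := by norm_cast
    rw [this]; ring
  have hlc1 : (myG d c s t u v ℂ).leadingCoeff
      = (c (Fin.last d) : ℂ) * ∏ i : Fin d, ((s:ℂ) - t * α i) := by
    rw [hg, leadingCoeff_mul, leadingCoeff_C, leadingCoeff_prod]
    congr 1
    exact Finset.prod_congr rfl fun i _ => leadingCoeff_linear (hst i)
  have hlc2 : (myG d c s t u v ℂ).leadingCoeff = (lam : ℂ) * (c (Fin.last d) : ℂ) := by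
    rw [hmap, leadingCoeff_mul, leadingCoeff_C]
    congr 1
    rw [leadingCoeff, natDegree_myF hcd, coeff_myF]
  have h := hlc1.symm.trans hlc2
  have h' : (c (Fin.last d) : ℂ) * ∏ i : Fin d, ((s:ℂ) - t * α i)
      = (c (Fin.last d) : ℂ) * (lam : ℂ) := by linear_combination h
  exact (mul_left_cancel₀ hcdC h').symm


lemma pow_lemma (hd : 3 ≤ d) (hcd : c (Fin.last d) ≠ 0)
    (α : Fin d → ℂ) (hinj : Function.Injective α)
    (hst : ∀ i, (s:ℂ) - t * α i ≠ 0)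
    (hcdC : ((c (Fin.last d) : ℂ)) ≠ 0)
    (hroot : ∀ i, eval (α i) (myF d c ℂ) = 0)
    (hg : myG d c s t u v ℂ
      = C ((c (Fin.last d) : ℂ))
        * ∏ i : Fin d, (C ((s : ℂ) - (t : ℂ) * α i) * X + C ((u : ℂ) - (v : ℂ) * α i)))
    (lamC : ℂ) (hlamC : lamC = ∏ i : Fin d, ((s:ℂ) - t * α i))
    (hmap : myG d c s t u v ℂ = C lamC * myF d c ℂ) :
    lamC ^ (2 * (d - 1)) = ((s * v - t * u : ℤ) : ℂ) ^ (d * (d - 1)) := by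
  classical
  set D : ℂ := ((s * v - t * u : ℤ) : ℂ) with hD
  -- each root is the image of some root under the Möbius map
  have hchoice : ∀ k : Fin d, ∃ i : Fin d,
      ((s:ℂ) - t * α i) * α k + ((u:ℂ) - v * α i) = 0 := by
    intro k
    have h0 : eval (α k) (myG d c s t u v ℂ) = 0 := by
      rw [hmap, eval_mul, hroot k, mul_zero]
    rw [hg, eval_mul, eval_prod] at h0
    rcases mul_eq_zero.mp h0 with h | h
    · exact absurd (by simpa using h) hcdC
    · obtain ⟨i, _, hi⟩ := Finset.prod_eq_zero_iff.mp h
      exact ⟨i, by simpa using hi⟩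
  choose ρ hρ using hchoice
  have hρinj : Function.Injective ρ := by
    intro k k' hkk'
    apply hinj
    have h1 := hρ k
    have h2 := hρ k'
    rw [hkk'] at h1
    have : ((s:ℂ) - t * α (ρ k')) * (α k - α k') = 0 := by linear_combination h1 - h2
    rcases mul_eq_zero.mp this with h | h
    · exact absurd h (hst _)
    · exact sub_eq_zero.mp h
  have hρbij : Function.Bijective ρ := Finite.injective_iff_bijective.mp hρinj
  set e : Fin d ≃ Fin d := Equiv.ofBijective ρ hρbij with he
  set π : Fin d → Fin d := ⇑e.symm with hπ
  have hkey : ∀ i : Fin d, ((s:ℂ) - t * α i) * α (π i) + ((u:ℂ) - v * α i) = 0 := by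
    intro i
    have h1 := hρ (π i)
    have h2 : ρ (π i) = i := by
      have := e.apply_symm_apply i
      rwa [Equiv.ofBijective_apply] at this
    rwa [h2] at h1
  have hH : ∀ i i' : Fin d,
      (α (π i) - α (π i')) * (((s:ℂ) - t * α i) * ((s:ℂ) - t * α i'))
        = D * (α i - α i') := by
    intro i i'
    have h1 := hkey i
    have h2 := hkey i'
    rw [hD]
    push_cast
    linear_combination ((s:ℂ) - t * α i') * h1 - ((s:ℂ) - t * α i) * h2
  set Δ : ℂ := ∏ i : Fin d, ∏ i' ∈ univ.erase i, (α i - α i') with hΔ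
  have hΔne : Δ ≠ 0 := by
    rw [hΔ]
    refine Finset.prod_ne_zero_iff.mpr fun i _ => Finset.prod_ne_zero_iff.mpr fun i' hi' => ?_
    exact sub_ne_zero.mpr (fun h => (Finset.ne_of_mem_erase hi') (hinj h.symm))
  -- claim 1 : the permuted discriminant-product equals Δ
  have hclaim1 : ∏ i : Fin d, ∏ i' ∈ univ.erase i, (α (π i) - α (π i')) = Δ := by
    have hπinj : Function.Injective π := e.symm.injective
    calc ∏ i : Fin d, ∏ i' ∈ univ.erase i, (α (π i) - α (π i'))
        = ∏ i : Fin d, ∏ i' ∈ univ.erase (π i), (α (π i) - α i') := by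
          refine Finset.prod_congr rfl fun i _ => ?_
          have himg : (univ.erase i).image π = univ.erase (π i) := by
            rw [Finset.image_erase hπinj]
            congr 1
            exact Finset.image_univ_equiv e.symm
          rw [← himg, Finset.prod_image (fun x _ y _ h => hπinj h)]
      _ = ∏ j : Fin d, ∏ i' ∈ univ.erase j, (α j - α i') :=
          Equiv.prod_comp e.symm (fun j => ∏ i' ∈ univ.erase j, (α j - α i'))
      _ = Δ := rfl
  -- claim 2
  have hcard : ∀ i : Fin d, (univ.erase i).card = d - 1 := by
    intro i
    rw [Finset.card_erase_of_mem (mem_univ i), Finset.card_univ, Fintype.card_fin]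
  have hclaim2 : ∏ i : Fin d, ∏ i' ∈ univ.erase i,
      (((s:ℂ) - t * α i) * ((s:ℂ) - t * α i')) = lamC ^ (2 * (d - 1)) := by
    have hinner : ∀ i : Fin d, ∏ i' ∈ univ.erase i,
        (((s:ℂ) - t * α i) * ((s:ℂ) - t * α i'))
          = ((s:ℂ) - t * α i) ^ (d - 2) * lamC := by
      intro i
      rw [Finset.prod_mul_distrib, Finset.prod_const, hcard i]
      have hpe : (∏ i' ∈ univ.erase i, ((s:ℂ) - t * α i')) * ((s:ℂ) - t * α i) = lamC := by
        rw [hlamC]; exact Finset.prod_erase_mul _ _ (mem_univ i)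
      have hd1 : d - 1 = (d - 2) + 1 := by omega
      rw [hd1, pow_succ]
      calc ((s:ℂ) - t*α i)^(d-2) * ((s:ℂ) - t*α i) * ∏ i' ∈ univ.erase i, ((s:ℂ) - t*α i')
          = ((s:ℂ) - t*α i)^(d-2) * ((∏ i' ∈ univ.erase i, ((s:ℂ) - t*α i')) * ((s:ℂ) - t*α i)) := by ring
        _ = ((s:ℂ) - t*α i)^(d-2) * lamC := by rw [hpe]
    calc ∏ i : Fin d, ∏ i' ∈ univ.erase i, (((s:ℂ) - t * α i) * ((s:ℂ) - t * α i'))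
        = ∏ i : Fin d, (((s:ℂ) - t * α i) ^ (d - 2) * lamC) :=
          Finset.prod_congr rfl fun i _ => hinner i
      _ = (∏ i : Fin d, ((s:ℂ) - t * α i)) ^ (d - 2) * lamC ^ d := by
          rw [Finset.prod_mul_distrib, Finset.prod_const, ← Finset.prod_pow,
            Finset.card_univ, Fintype.card_fin]
      _ = lamC ^ (d - 2) * lamC ^ d := by rw [← hlamC]
      _ = lamC ^ (2 * (d - 1)) := by rw [← pow_add]; congr 1; omega
  -- claim 3
  have hclaim3 : ∏ i : Fin d, ∏ i' ∈ univ.erase i, (D * (α i - α i'))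
      = D ^ (d * (d - 1)) * Δ := by
    calc ∏ i : Fin d, ∏ i' ∈ univ.erase i, (D * (α i - α i'))
        = ∏ i : Fin d, (D ^ (d-1) * ∏ i' ∈ univ.erase i, (α i - α i')) := by
          refine Finset.prod_congr rfl fun i _ => ?_
          rw [Finset.prod_mul_distrib, Finset.prod_const, hcard i]
      _ = D ^ ((d-1) * d) * Δ := by
          rw [Finset.prod_mul_distrib, Finset.prod_const, Finset.card_univ, Fintype.card_fin,
            ← pow_mul, hΔ]
      _ = D ^ (d * (d-1)) * Δ := by rw [Nat.mul_comm]
  -- combine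
  have hcomb : Δ * lamC ^ (2 * (d - 1)) = D ^ (d * (d - 1)) * Δ := by
    calc Δ * lamC ^ (2 * (d - 1))
        = (∏ i : Fin d, ∏ i' ∈ univ.erase i, (α (π i) - α (π i')))
            * ∏ i : Fin d, ∏ i' ∈ univ.erase i, (((s:ℂ) - t * α i) * ((s:ℂ) - t * α i')) := by
          rw [hclaim1, hclaim2]
      _ = ∏ i : Fin d, ∏ i' ∈ univ.erase i,
            ((α (π i) - α (π i')) * (((s:ℂ) - t * α i) * ((s:ℂ) - t * α i'))) := by
          rw [← Finset.prod_mul_distrib]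
          exact Finset.prod_congr rfl fun i _ => (Finset.prod_mul_distrib).symm
      _ = ∏ i : Fin d, ∏ i' ∈ univ.erase i, (D * (α i - α i')) :=
          Finset.prod_congr rfl fun i _ => Finset.prod_congr rfl fun i' _ => hH i i'
      _ = D ^ (d * (d - 1)) * Δ := hclaim3
  have hcomb' : Δ * lamC ^ (2 * (d - 1)) = Δ * D ^ (d * (d - 1)) :=
    hcomb.trans (mul_comm _ _)
  exact mul_left_cancel₀ hΔne hcomb'

lemma lam_sq (hd : 3 ≤ d) (lam : ℚ) (D : ℤ) (hDne : D ≠ 0)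
    (h : (lam : ℂ) ^ (2 * (d - 1)) = ((D : ℤ) : ℂ) ^ (d * (d - 1))) :
    lam ^ 2 = ((|D| : ℤ) : ℚ) ^ d := by
  have hq : lam ^ (2 * (d - 1)) = (D : ℚ) ^ (d * (d - 1)) := by exact_mod_cast h
  have h1 : (lam ^ 2) ^ (d - 1) = lam ^ (2 * (d - 1)) := by rw [← pow_mul]
  have h2 : (((|D| : ℤ) : ℚ) ^ d) ^ (d - 1) = ((|D| : ℤ) : ℚ) ^ (d * (d - 1)) := by
    rw [← pow_mul]
  have habs : (D : ℚ) ^ (d * (d - 1)) = ((|D| : ℤ) : ℚ) ^ (d * (d - 1)) := by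
    have hnn : 0 ≤ (D : ℚ) ^ (d * (d - 1)) := by
      rw [← hq, ← h1]
      positivity
    calc (D : ℚ) ^ (d * (d - 1)) = |(D : ℚ) ^ (d * (d - 1))| := (abs_of_nonneg hnn).symm
      _ = |(D : ℚ)| ^ (d * (d - 1)) := abs_pow _ _
      _ = ((|D| : ℤ) : ℚ) ^ (d * (d - 1)) := by push_cast; ring
  have hmain : (lam ^ 2) ^ (d - 1) = (((|D| : ℤ) : ℚ) ^ d) ^ (d - 1) := by
    rw [h1, h2, hq, habs]
  have hd1 : d - 1 ≠ 0 := by omega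
  refine (pow_left_strictMonoOn₀ hd1).injOn ?_ ?_ hmain
  · simp only [Set.mem_setOf_eq, Set.mem_Ici]; positivity
  · simp only [Set.mem_setOf_eq, Set.mem_Ici]; positivity

lemma binForm_eval (x y : ℝ) :
    binForm d c x y = ∑ i : Fin (d + 1), (c i : ℝ) * x ^ (i : ℕ) * y ^ (d - (i : ℕ)) := rfl

lemma binForm_smul (k x y : ℝ) : binForm d c (k * x) (k * y) = k ^ d * binForm d c x y := by
  rw [binForm, binForm, Finset.mul_sum]
  refine Finset.sum_congr rfl fun i _ => ?_
  have hi : (i : ℕ) ≤ d := Nat.lt_succ_iff.mp i.2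
  have hk : k ^ (i:ℕ) * k ^ (d - (i:ℕ)) = k ^ d := by
    rw [← pow_add, Nat.add_sub_cancel' hi]
  rw [mul_pow, mul_pow]
  linear_combination ((c i : ℝ) * x ^ (i:ℕ) * y ^ (d - (i:ℕ))) * hk

lemma binForm_one (x : ℝ) :
    binForm d c x 1 = ∑ i : Fin (d + 1), (c i : ℝ) * x ^ (i : ℕ) := by
  rw [binForm]
  exact Finset.sum_congr rfl fun i _ => by rw [one_pow, mul_one]

lemma binForm_continuous : Continuous fun p : ℝ × ℝ => binForm d c p.1 p.2 := by
  unfold binForm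
  fun_prop

/-- transfer the one-variable identity to the two-variable one -/
lemma funEq_of_oneVar {lam : ℝ} {s t u v : ℤ}
    (h : ∀ x : ℝ, (∑ i : Fin (d+1), (c i : ℝ) * ((s:ℝ) * x + u) ^ (i:ℕ)
        * ((t:ℝ) * x + v) ^ (d - (i:ℕ))) = lam * ∑ i : Fin (d+1), (c i : ℝ) * x ^ (i:ℕ)) :
    ∀ x y : ℝ, binForm d c ((s:ℝ) * x + (u:ℝ) * y) ((t:ℝ) * x + (v:ℝ) * y)
      = lam * binForm d c x y := by
  intro x y
  have key : ∀ y' : ℝ, y' ≠ 0 →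
      binForm d c ((s:ℝ) * x + (u:ℝ) * y') ((t:ℝ) * x + (v:ℝ) * y')
        = lam * binForm d c x y' := by
    intro y' hy'
    set z : ℝ := x / y' with hz
    have hx : x = y' * z := by rw [hz, mul_div_cancel₀ _ hy']
    have e1 : (s:ℝ) * x + (u:ℝ) * y' = y' * ((s:ℝ) * z + u) := by rw [hx]; ring
    have e2 : (t:ℝ) * x + (v:ℝ) * y' = y' * ((t:ℝ) * z + v) := by rw [hx]; ring
    rw [e1, e2, binForm_smul]
    have e3 : binForm d c ((s:ℝ) * z + u) ((t:ℝ) * z + v)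
        = ∑ i : Fin (d+1), (c i : ℝ) * ((s:ℝ) * z + u) ^ (i:ℕ)
            * ((t:ℝ) * z + v) ^ (d - (i:ℕ)) := rfl
    rw [e3, h z]
    have e4 : binForm d c x y' = y' ^ d * ∑ i : Fin (d+1), (c i : ℝ) * z ^ (i:ℕ) := by
      have : binForm d c x y' = binForm d c (y' * z) (y' * 1) := by rw [← hx, mul_one]
      rw [this, binForm_smul, binForm_one]
    rw [e4]
    ring
  -- both sides are continuous in y and agree for y ≠ 0
  have hc1 : Continuous fun y' : ℝ =>
      binForm d c ((s:ℝ) * x + (u:ℝ) * y') ((t:ℝ) * x + (v:ℝ) * y') := by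
    unfold binForm
    fun_prop
  have hc2 : Continuous fun y' : ℝ => lam * binForm d c x y' := by
    unfold binForm
    fun_prop
  have heq := Continuous.ext_on (dense_compl_singleton (0:ℝ)) hc1 hc2
    (fun y' hy' => key y' hy')
  exact congrFun heq y


end StmtAux


/-- let `F` be an irreducible binary form of degree `d ≥ 3` with roots
`α₁, …, α_d` of `F(x,1)` (taken in `ℂ`, an algebraic closure of `ℚ`). For integers
`s,t,u,v` with `sv-tu ≠ 0`, there exists an index `j` with
`α_j = (v·α₁ - u)/(-t·α₁ + s)` if and only if `|sv-tu|^{-1/2}·(s u; t v) ∈ Aut'|F|`. -/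
theorem stmt8 (d : ℕ) (hd : 3 ≤ d) (c : Fin (d + 1) → ℤ) (hcd : c (Fin.last d) ≠ 0)
    (hirr : Irreducible (∑ i : Fin (d + 1), Polynomial.C ((c i : ℚ)) * Polynomial.X ^ (i : ℕ)))
    (α : Fin d → ℂ) (hinj : Function.Injective α)
    (hroot : ∀ i : Fin d, ∑ j : Fin (d + 1), (c j : ℂ) * (α i) ^ (j : ℕ) = 0)
    (s t u v : ℤ) (hdet : s * v - t * u ≠ 0) :
    (∃ j : Fin d, α j * (-(t : ℂ) * α ⟨0, by omega⟩ + (s : ℂ)) =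
        (v : ℂ) * α ⟨0, by omega⟩ - (u : ℂ)) ↔
    (Real.sqrt |((s * v - t * u : ℤ) : ℝ)|)⁻¹ •
        !![(s : ℝ), (u : ℝ); (t : ℝ), (v : ℝ)] ∈ autSetF d (binForm d c) := by
  have hd0 : 0 < d := by omega
  set i0 : Fin d := ⟨0, hd0⟩ with hi0
  have hirr' : Irreducible (myF d c ℚ) := hirr
  have hrootC : ∀ i, eval (α i) (myF d c ℂ) = 0 := fun i => by
    rw [eval_myF]; exact hroot i
  have hcdC : ((c (Fin.last d) : ℂ)) ≠ 0 := by exact_mod_cast hcd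
  have hst : ∀ i, (s:ℂ) - t * α i ≠ 0 := fun i =>
    sub_ne_zero' hd hcd hirr' (hrootC i) (st_not_both_zero hdet)
  have hDR : ((s * v - t * u : ℤ) : ℝ) ≠ 0 := by exact_mod_cast hdet
  set r : ℝ := Real.sqrt |((s * v - t * u : ℤ) : ℝ)| with hr
  have hrpos : 0 < r := Real.sqrt_pos.mpr (abs_pos.mpr hDR)
  have hrsq : r ^ 2 = |((s * v - t * u : ℤ) : ℝ)| := Real.sq_sqrt (abs_nonneg _)
  constructor
  · rintro ⟨j, hj⟩
    have hj' : ((s:ℂ) - t * α i0) * α j + ((u:ℂ) - v * α i0) = 0 := by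
      rw [hi0]; linear_combination hj
    obtain ⟨lam, hlamne, hgf, hlamC⟩ := div_lemma hd hcd hirr' α hinj hrootC hdet i0 j hj'
    have hmapC : myG d c s t u v ℂ = C ((lam : ℂ)) * myF d c ℂ := by
      have := congrArg (Polynomial.map (algebraMap ℚ ℂ)) hgf
      rw [map_myG (algebraMap ℚ ℂ), Polynomial.map_mul, map_myF (algebraMap ℚ ℂ), map_C] at this
      rw [this]
      norm_cast
    have hg := factor_myG hdet α (factor_myF hcd α hinj hrootC)
    have hpow := pow_lemma hd hcd α hinj hst hcdC hrootC hg ((lam : ℂ)) hlamC hmapC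
    have hsq : lam ^ 2 = ((|s * v - t * u| : ℤ) : ℚ) ^ d := lam_sq hd lam _ hdet hpow
    set μ : ℝ := (lam : ℝ) with hμ
    have hμne : μ ≠ 0 := by rw [hμ]; exact_mod_cast hlamne
    have hμsq : μ ^ 2 = |((s * v - t * u : ℤ) : ℝ)| ^ d := by
      have : (μ:ℝ) ^ 2 = ((|s * v - t * u| : ℤ) : ℝ) ^ d := by
        rw [hμ]; exact_mod_cast hsq
      rw [this]
      push_cast
      ring
    have hfactor : (μ - r ^ d) * (μ + r ^ d) = 0 := by
      have h1 : (r ^ d) ^ 2 = |((s * v - t * u : ℤ) : ℝ)| ^ d := by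
        rw [← pow_mul, mul_comm, pow_mul, hrsq]
      linear_combination hμsq - h1
    have hgfR : myG d c s t u v ℝ = C μ * myF d c ℝ := by
      have := congrArg (Polynomial.map (algebraMap ℚ ℝ)) hgf
      rw [map_myG (algebraMap ℚ ℝ), Polynomial.map_mul, map_myF (algebraMap ℚ ℝ), map_C] at this
      rw [this]
      norm_cast
    have honevar : ∀ x : ℝ, (∑ i : Fin (d+1), (c i : ℝ) * ((s:ℝ) * x + u) ^ (i:ℕ)
        * ((t:ℝ) * x + v) ^ (d - (i:ℕ))) = μ * ∑ i : Fin (d+1), (c i : ℝ) * x ^ (i:ℕ) := by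
      intro x
      have := congrArg (eval x) hgfR
      rwa [eval_myG, eval_mul, eval_C, eval_myF] at this
    have hfe := funEq_of_oneVar honevar
    refine ⟨s, t, u, v, hdet, rfl, ?_⟩
    rcases mul_eq_zero.mp hfactor with hcase | hcase
    · left
      intro x y
      have h := hfe x y
      have hμr : μ = r ^ d := by linarith [hcase]
      rw [hμr] at h
      exact h
    · right
      intro x y
      have h := hfe x y
      have hμr : μ = -(r ^ d) := by linarith [hcase]
      rw [hμr] at h
      rw [h]
      ring
  · rintro ⟨s', t', u', v', hdet', hM, hfe'⟩
    -- extract proportionality of entries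
    have hDR' : ((s' * v' - t' * u' : ℤ) : ℝ) ≠ 0 := by exact_mod_cast hdet'
    set r' : ℝ := Real.sqrt |((s' * v' - t' * u' : ℤ) : ℝ)| with hr'
    have hr'pos : 0 < r' := Real.sqrt_pos.mpr (abs_pos.mpr hDR')
    have hent : ∀ i j : Fin 2, (r⁻¹ • !![(s : ℝ), (u : ℝ); (t : ℝ), (v : ℝ)]) i j
        = (r'⁻¹ • !![(s' : ℝ), (u' : ℝ); (t' : ℝ), (v' : ℝ)]) i j := by
      intro i j; rw [hM]
    set k : ℝ := r / r' with hk
    have hkpos : 0 < k := div_pos hrpos hr'pos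
    have hkr : k * r' = r := by rw [hk]; field_simp
    have hks : (s : ℝ) = k * s' := by
      have := hent 0 0
      simp only [Matrix.smul_apply, Matrix.cons_val', Matrix.cons_val_zero,
        Matrix.empty_val', Matrix.cons_val_fin_one, smul_eq_mul, Matrix.of_apply] at this
      rw [hk]
      field_simp at this ⊢
      linarith [this]
    have hku : (u : ℝ) = k * u' := by
      have := hent 0 1
      simp only [Matrix.smul_apply, Matrix.cons_val', Matrix.cons_val_zero,
        Matrix.cons_val_one, Matrix.head_cons, Matrix.empty_val',
        Matrix.cons_val_fin_one, smul_eq_mul, Matrix.of_apply] at this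
      rw [hk]
      field_simp at this ⊢
      linarith [this]
    have hkt : (t : ℝ) = k * t' := by
      have := hent 1 0
      simp only [Matrix.smul_apply, Matrix.cons_val', Matrix.cons_val_zero,
        Matrix.cons_val_one, Matrix.head_cons, Matrix.empty_val',
        Matrix.cons_val_fin_one, smul_eq_mul, Matrix.of_apply] at this
      rw [hk]
      field_simp at this ⊢
      linarith [this]
    have hkv : (v : ℝ) = k * v' := by
      have := hent 1 1
      simp only [Matrix.smul_apply, Matrix.cons_val', Matrix.cons_val_zero,
        Matrix.cons_val_one, Matrix.head_cons, Matrix.empty_val',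
        Matrix.cons_val_fin_one, smul_eq_mul, Matrix.of_apply] at this
      rw [hk]
      field_simp at this ⊢
      linarith [this]
    -- functional equation for the original s,t,u,v
    have hfe : (∀ x y : ℝ, binForm d c ((s:ℝ)*x + (u:ℝ)*y) ((t:ℝ)*x + (v:ℝ)*y)
          = r ^ d * binForm d c x y)
        ∨ (∀ x y : ℝ, binForm d c ((s:ℝ)*x + (u:ℝ)*y) ((t:ℝ)*x + (v:ℝ)*y)
          = -(r ^ d * binForm d c x y)) := by
      have htrans : ∀ x y : ℝ, binForm d c ((s:ℝ)*x + (u:ℝ)*y) ((t:ℝ)*x + (v:ℝ)*y)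
          = k ^ d * binForm d c ((s':ℝ)*x + (u':ℝ)*y) ((t':ℝ)*x + (v':ℝ)*y) := by
        intro x y
        have e1 : (s:ℝ)*x + (u:ℝ)*y = k * ((s':ℝ)*x + (u':ℝ)*y) := by
          rw [hks, hku]; ring
        have e2 : (t:ℝ)*x + (v:ℝ)*y = k * ((t':ℝ)*x + (v':ℝ)*y) := by
          rw [hkt, hkv]; ring
        rw [e1, e2, binForm_smul]
      have hkrd : k ^ d * r' ^ d = r ^ d := by rw [← mul_pow, hkr]
      rcases hfe' with hε | hε
      · left
        intro x y
        rw [htrans x y, hε x y, ← mul_assoc, hkrd]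
      · right
        intro x y
        rw [htrans x y, hε x y]
        linear_combination (-(binForm d c x y)) * hkrd
    -- one-variable identity and polynomial identity over ℝ
    obtain ⟨μ, hμne, hone⟩ : ∃ μ : ℝ, μ ≠ 0 ∧ ∀ x : ℝ,
        (∑ i : Fin (d+1), (c i : ℝ) * ((s:ℝ) * x + u) ^ (i:ℕ)
          * ((t:ℝ) * x + v) ^ (d - (i:ℕ))) = μ * ∑ i : Fin (d+1), (c i : ℝ) * x ^ (i:ℕ) := by
      rcases hfe with hε | hε
      · refine ⟨r ^ d, by positivity, fun x => ?_⟩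
        have h := hε x 1
        rw [mul_one, mul_one, binForm_one] at h
        exact h
      · refine ⟨-(r ^ d), neg_ne_zero.mpr (by positivity), fun x => ?_⟩
        have h := hε x 1
        rw [mul_one, mul_one, binForm_one] at h
        exact h.trans (by ring)
    have hpoly : myG d c s t u v ℝ = C μ * myF d c ℝ := by
      apply Polynomial.funext
      intro x
      rw [eval_myG, eval_mul, eval_C, eval_myF]
      exact hone x
    have hpolyC : myG d c s t u v ℂ = C ((μ : ℂ)) * myF d c ℂ := by
      have := congrArg (Polynomial.map (algebraMap ℝ ℂ)) hpoly
      rwa [map_myG (algebraMap ℝ ℂ), Polynomial.map_mul, map_myF (algebraMap ℝ ℂ),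
        map_C, Complex.coe_algebraMap] at this
    -- evaluate at β
    have hE : (s:ℂ) - t * α i0 ≠ 0 := hst i0
    set β : ℂ := ((v:ℂ) * α i0 - u) / ((s:ℂ) - t * α i0) with hβ
    have hsβ : (s:ℂ) * β + u = ((s*v - t*u : ℤ):ℂ) * α i0 / ((s:ℂ) - t * α i0) := by
      rw [hβ, eq_div_iff hE, add_mul, mul_assoc, div_mul_cancel₀ _ hE]
      push_cast
      ring
    have htβ : (t:ℂ) * β + v = ((s*v - t*u : ℤ):ℂ) / ((s:ℂ) - t * α i0) := by
      rw [hβ]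
      field_simp
      push_cast
      ring
    have hevalg : eval β (myG d c s t u v ℂ) = 0 := by
      rw [eval_myG]
      calc ∑ i : Fin (d+1), (c i : ℂ) * ((s:ℂ) * β + u) ^ (i:ℕ) * ((t:ℂ) * β + v) ^ (d - (i:ℕ))
          = ∑ i : Fin (d+1), (c i : ℂ) * (α i0) ^ (i:ℕ)
              * (((s*v - t*u : ℤ):ℂ) / ((s:ℂ) - t * α i0)) ^ d := by
            refine Finset.sum_congr rfl fun i _ => ?_
            have hi : (i : ℕ) ≤ d := Nat.lt_succ_iff.mp i.2
            set w : ℂ := ((s*v - t*u : ℤ):ℂ) / ((s:ℂ) - t * α i0) with hw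
            have hwpow : w ^ (i:ℕ) * w ^ (d - (i:ℕ)) = w ^ d := by
              rw [← pow_add, Nat.add_sub_cancel' hi]
            have hwa : ((s*v - t*u : ℤ):ℂ) * α i0 / ((s:ℂ) - t * α i0) = w * α i0 := by
              rw [hw]; ring
            rw [hsβ, htβ, hwa, mul_pow]
            linear_combination ((c i : ℂ) * α i0 ^ (i:ℕ)) * hwpow
        _ = (∑ i : Fin (d+1), (c i : ℂ) * (α i0) ^ (i:ℕ))
              * (((s*v - t*u : ℤ):ℂ) / ((s:ℂ) - t * α i0)) ^ d := by
            rw [Finset.sum_mul]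
        _ = 0 := by rw [hroot i0, zero_mul]
    have hevalf : eval β (myF d c ℂ) = 0 := by
      rw [hpolyC, eval_mul, eval_C] at hevalg
      have hμC : ((μ : ℂ)) ≠ 0 := by exact_mod_cast hμne
      exact (mul_eq_zero.mp hevalg).resolve_left hμC
    rw [factor_myF hcd α hinj hrootC, eval_mul, eval_C, eval_prod] at hevalf
    rcases mul_eq_zero.mp hevalf with h | h
    · exact absurd h hcdC
    · obtain ⟨j, _, hj⟩ := Finset.prod_eq_zero_iff.mp h
      simp only [eval_sub, eval_X, eval_C] at hj
      have hβj : β = α j := sub_eq_zero.mp hj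
      refine ⟨j, ?_⟩
      have hmul : β * ((s:ℂ) - t * α i0) = (v:ℂ) * α i0 - u := by
        rw [hβ]; exact div_mul_cancel₀ _ hE
      rw [← hβj]
      rw [hi0] at hmul ⊢
      linear_combination hmul
end
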